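/- For every positive integer n, the restriction φ of the map Φ to ℰ_n is a bijection from ℰ_n to 𝒢_n, where Φ is the bijection from bicolored binary trees on [n] to bicolored plane trees on [n+1] rooted at a black vertex n+1 given by: the root of B becomes the first child of the black root n+1; v is the left child of u in B iff v is the first child of u in Φ(B); v is the right child of u in B iff v is the sibling immediately to the right of u in Φ(B); and colors of vertices are preserved. -/

import Mathlib

/-- Labeled bicolored binary trees: each vertex carries a label and a color
(`true` = black, `false` = white), and has a left and a right (possibly empty) subtree. -/
inductive CBT : Type
  | nil : CBT
  | node (label : ℕ) (black : Bool) (l r : CBT) : CBT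
deriving DecidableEq

/-- The multiset of labels of a bicolored binary tree. -/
def CBT.labels : CBT → Multiset ℕ
  | .nil => 0
  | .node a _ l r => a ::ₘ (l.labels + r.labels)

/-- The smallest label of a bicolored binary tree (`⊤` for the empty tree). -/
noncomputable def CBT.minL : CBT → ℕ∞
  | .nil => ⊤
  | .node a _ l r => min (a : ℕ∞) (min l.minL r.minL)

/-- A vertex is *proper* if its label is the smallest among its descendants (including
itself), and *improper* otherwise; so the vertex `node a c l r` is improper iff
`min l.minL r.minL < a`.  `CBT.improperBlack B` says every improper vertex of `B` is black. -/
def CBT.improperBlack : CBT → Prop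
  | .nil => True
  | .node a c l r =>
      (min l.minL r.minL < (a : ℕ∞) → c = true) ∧ l.improperBlack ∧ r.improperBlack

/-- `𝒟_n`: bicolored binary trees on `[n] = {1,…,n}` whose improper vertices are all black. -/
def Dset (n : ℕ) : Set CBT :=
  {B | B.labels = (Finset.Icc 1 n).val ∧ B.improperBlack}

/-- `CBT.leftImp B` says every improper vertex of `B` is *left improper*, i.e. the
smallest label in its left subtree is smaller than the smallest label in its right
subtree. -/
def CBT.leftImp : CBT → Prop
  | .nil => True
  | .node a _ l r =>
      (min l.minL r.minL < (a : ℕ∞) → l.minL < r.minL) ∧ l.leftImp ∧ r.leftImp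

/-- `ℰ_n`: bicolored binary trees on `[n]` whose improper vertices are all left improper. -/
def Eset (n : ℕ) : Set CBT :=
  {B | B.labels = (Finset.Icc 1 n).val ∧ B.leftImp}

/-- The flip map `f`: it performs the flip `f_v` (swap the two subtrees of `v` and change
the color of `v`) simultaneously at every *right improper* vertex `v`, i.e. at every
vertex with `m(R) < m(L)` and `m(R) < label`. -/
noncomputable def CBT.flip : CBT → CBT
  | .nil => .nil
  | .node a c l r =>
      if r.minL < l.minL ∧ r.minL < (a : ℕ∞) then .node a (!c) r.flip l.flip
      else .node a c l.flip r.flip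

/-- Bicolored plane trees: a root with a label, a color (`true` = black), and a linearly
ordered list of (plane-tree) subtrees. -/
inductive CPT : Type
  | node (label : ℕ) (black : Bool) (children : List CPT) : CPT

/-- The multiset of labels of a bicolored plane tree. -/
def CPT.labels : CPT → Multiset ℕ
  | .node a _ ch => a ::ₘ (ch.attach.map fun c => CPT.labels c.1).sum
decreasing_by
  have := List.sizeOf_lt_of_mem c.2
  simp only [CPT.node.sizeOf_spec]
  omega

/-- Root label. -/
def CPT.rootLabel : CPT → ℕ
  | .node a _ _ => a

/-- Root color. -/
def CPT.rootBlack : CPT → Bool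
  | .node _ c _ => c

/-- Smallest label of a bicolored plane tree, as an element of `ℕ∞`. -/
noncomputable def CPT.minL (P : CPT) : ℕ∞ := (P.labels.map ((↑) : ℕ → ℕ∞)).inf

/-- At every vertex of the plane tree, the smallest labels of the descendant subtrees of
its children increase from left to right.  This is the condition identifying (bicolored,
non-plane) rooted trees inside bicolored plane trees. -/
noncomputable def CPT.ordered : CPT → Prop
  | .node _ _ ch => List.Chain' (· < ·) (ch.map CPT.minL) ∧ ∀ c ∈ ch, c.ordered

/-- The natural "left child → first child, right child → next sibling" correspondence,
sending a bicolored binary tree to the list of bicolored plane trees formed by its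
leftmost spine. -/
def CBT.toForest : CBT → List CPT
  | .nil => []
  | .node a c l r => CPT.node a c l.toForest :: r.toForest

/-- The map `Φ` from bicolored binary trees on `[n]` to bicolored plane trees on `[n+1]`
with black root `n+1`: the root of `B` becomes the first child of the black root `n+1`;
`v` is the left child of `u` in `B` iff `v` is the first child of `u` in `Φ(B)`; `v` is
the right child of `u` in `B` iff `v` is the sibling immediately to the right of `u` in
`Φ(B)`; colors are preserved. -/
def Phi (n : ℕ) (B : CBT) : CPT := CPT.node (n + 1) true B.toForest

/-- `𝒢_n`: bicolored plane trees on `[n+1]` whose root is the vertex `n+1` colored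
black, satisfying the `ordered` condition (i.e. plane trees representing non-plane
bicolored trees on `[n+1]` rooted at black `n+1`). -/
noncomputable def Gset (n : ℕ) : Set CPT :=
  {Q | Q.labels = (Finset.Icc 1 (n + 1)).val ∧ Q.rootLabel = n + 1 ∧
       Q.rootBlack = true ∧ Q.ordered}

lemma CPT.labels_node (a : ℕ) (c : Bool) (ch : List CPT) :
    (CPT.node a c ch).labels = a ::ₘ (ch.map CPT.labels).sum := by
  rw [CPT.labels]
  congr 1
  rw [List.attach_map_val]

lemma CBT.labels_toForest : ∀ B : CBT, (B.toForest.map CPT.labels).sum = B.labels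
  | .nil => rfl
  | .node a c l r => by
      simp only [CBT.toForest, List.map_cons, List.sum_cons, CPT.labels_node, CBT.labels,
        CBT.labels_toForest l, CBT.labels_toForest r, Multiset.cons_add]

lemma CBT.minL_eq_inf : ∀ B : CBT, B.minL = (B.labels.map ((↑) : ℕ → ℕ∞)).inf
  | .nil => rfl
  | .node a c l r => by
      simp only [CBT.minL, CBT.labels, Multiset.map_cons, Multiset.map_add,
        Multiset.inf_cons, Multiset.inf_add, CBT.minL_eq_inf l, CBT.minL_eq_inf r]

lemma CPT.minL_node (a : ℕ) (c : Bool) (ch : List CPT) :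
    (CPT.node a c ch).minL = min (a : ℕ∞) ((ch.map CPT.minL).foldr min ⊤) := by
  rw [CPT.minL, CPT.labels_node]
  simp only [Multiset.map_cons, Multiset.inf_cons]
  congr 1
  induction ch with
  | nil => simp
  | cons h t ih =>
      simp only [List.map_cons, List.sum_cons, Multiset.map_add, Multiset.inf_add,
        List.foldr_cons, ih]
      rfl

lemma CBT.minL_toForest : ∀ B : CBT, (B.toForest.map CPT.minL).foldr min ⊤ = B.minL
  | .nil => rfl
  | .node a c l r => by
      simp only [CBT.toForest, List.map_cons, List.foldr_cons, CPT.minL_node,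
        CBT.minL_toForest l, CBT.minL_toForest r, CBT.minL]
      rw [min_assoc]

lemma le_foldr_min {L : List ℕ∞} {x : ℕ∞} (h : ∀ y ∈ L, x ≤ y) : x ≤ L.foldr min ⊤ := by
  induction L with
  | nil => simp
  | cons a t ih =>
      simp only [List.foldr_cons, le_min_iff]
      exact ⟨h a (by simp), ih fun y hy => h y (List.mem_cons_of_mem _ hy)⟩

lemma foldr_min_of_chain {y : ℕ∞} {L : List ℕ∞} (h : List.Chain' (· < ·) (y :: L)) :
    (y :: L).foldr min ⊤ = y := by
  have hp := List.isChain_iff_pairwise.mp h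
  rw [List.pairwise_cons] at hp
  simp only [List.foldr_cons]
  exact min_eq_left (le_foldr_min fun z hz => (hp.1 z hz).le)

lemma CBT.minL_attained : ∀ B : CBT, B.minL ≠ ⊤ → ∃ m ∈ B.labels, B.minL = (m : ℕ∞)
  | .nil => fun h => absurd rfl h
  | .node a c l r => fun _ => by
      rcases le_total (a : ℕ∞) (min l.minL r.minL) with h | h
      · exact ⟨a, by simp [CBT.labels], by simp [CBT.minL, min_eq_left h]⟩
      · have hm : (CBT.node a c l r).minL = min l.minL r.minL := by
          simp only [CBT.minL]; exact min_eq_right h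
        rcases le_total l.minL r.minL with h2 | h2
        · have hl : l.minL ≠ ⊤ := by
            intro ht
            have : (a : ℕ∞) = ⊤ := top_le_iff.mp (by simpa [ht, top_le_iff.mp (ht ▸ h2)] using h)
            exact (WithTop.coe_ne_top : (a:ℕ∞) ≠ ⊤) this
          obtain ⟨m, hmem, hme⟩ := CBT.minL_attained l hl
          exact ⟨m, by simp [CBT.labels, hmem], by rw [hm, min_eq_left h2, hme]⟩
        · have hr : r.minL ≠ ⊤ := by
            intro ht
            have : (a : ℕ∞) = ⊤ := top_le_iff.mp (by simpa [ht, top_le_iff.mp (ht ▸ h2)] using h)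
            exact (WithTop.coe_ne_top : (a:ℕ∞) ≠ ⊤) this
          obtain ⟨m, hmem, hme⟩ := CBT.minL_attained r hr
          exact ⟨m, by simp [CBT.labels, hmem], by rw [hm, min_eq_right h2, hme]⟩

lemma CPT.ordered_node (a : ℕ) (c : Bool) (ch : List CPT) :
    (CPT.node a c ch).ordered ↔
      (List.Chain' (· < ·) (ch.map CPT.minL) ∧ ∀ x ∈ ch, x.ordered) := by
  rw [CPT.ordered]
lemma CBT.toForest_eq_nil_iff : ∀ B : CBT, B.toForest = [] ↔ B = .nil
  | .nil => by simp [CBT.toForest]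
  | .node a c l r => by simp [CBT.toForest]

lemma CBT.minL_ne_top {a : ℕ} {c : Bool} {l r : CBT} : (CBT.node a c l r).minL ≠ ⊤ :=
  (lt_of_le_of_lt (min_le_left _ _) (WithTop.coe_lt_top a)).ne

lemma CBT.leftImp_iff_forest : ∀ B : CBT, B.labels.Nodup →
    (B.leftImp ↔ (List.Chain' (· < ·) (B.toForest.map CPT.minL) ∧
      ∀ c ∈ B.toForest, c.ordered))
  | .nil => fun _ => by simp [CBT.leftImp, CBT.toForest, List.Chain', List.isChain_nil]
  | .node a c l r => fun hnd => by
      rw [CBT.labels, Multiset.nodup_cons] at hnd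
      obtain ⟨ha, hnd'⟩ := hnd
      rw [Multiset.nodup_add] at hnd'
      obtain ⟨hl, hr, -⟩ := hnd'
      have har : a ∉ r.labels := fun h => ha (Multiset.mem_add.mpr (Or.inr h))
      have IHl := CBT.leftImp_iff_forest l hl
      have IHr := CBT.leftImp_iff_forest r hr
      have hmin : (CPT.node a c l.toForest).minL = min (a : ℕ∞) l.minL := by
        rw [CPT.minL_node, CBT.minL_toForest]
      simp only [CBT.leftImp, CBT.toForest, List.map_cons, List.Chain', List.isChain_cons,
        List.mem_cons, forall_eq_or_imp, CPT.ordered_node, hmin]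
      constructor
      · rintro ⟨P, hli, hri⟩
        obtain ⟨Cr, Or⟩ := IHr.mp hri
        refine ⟨⟨?_, Cr⟩, IHl.mp hli, Or⟩
        intro y hy
        rcases heq : r.toForest.map CPT.minL with _ | ⟨y₀, ys⟩
        · rw [heq] at hy; simp at hy
        · rw [heq] at hy Cr; simp only [List.head?_cons, Option.mem_some_iff] at hy
          subst hy
          have hy₀ : y₀ = r.minL := by
            rw [← CBT.minL_toForest r, heq, foldr_min_of_chain Cr]
          rw [hy₀]
          rcases lt_or_ge (l.minL ⊓ r.minL) (a : ℕ∞) with hlt | hle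
          · exact inf_le_right.trans_lt (P hlt)
          · have hale : (a : ℕ∞) ≤ r.minL := le_trans hle inf_le_right
            have hrnil : r ≠ .nil := by
              intro h
              subst h
              rw [show (CBT.nil).toForest = [] from rfl] at heq
              simp at heq
            have hrt : r.minL ≠ ⊤ := by
              cases r with
              | nil => exact absurd rfl hrnil
              | node a' c' l' r' => exact CBT.minL_ne_top
            obtain ⟨m, hmm, hme⟩ := CBT.minL_attained r hrt
            have hane : a ≠ m := fun h => har (h ▸ hmm)
            have : (a : ℕ∞) < (m : ℕ∞) := by
              rw [hme] at hale
              exact_mod_cast lt_of_le_of_ne (by exact_mod_cast hale)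
                (by exact_mod_cast hane)
            exact inf_le_left.trans_lt (hme ▸ this)
      · rintro ⟨⟨H, Cr⟩, Ol, Or⟩
        refine ⟨?_, IHl.mpr Ol, IHr.mpr ⟨Cr, Or⟩⟩
        intro hlt
        rcases heq : r.toForest.map CPT.minL with _ | ⟨y₀, ys⟩
        · have : r = .nil := (CBT.toForest_eq_nil_iff r).mp (List.map_eq_nil_iff.mp heq)
          subst this
          rw [show (CBT.nil).minL = ⊤ from rfl] at hlt ⊢
          rw [inf_top_eq] at hlt
          exact hlt.trans (WithTop.coe_lt_top a)
        · rw [heq] at H Cr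
          have hy₀ : y₀ = r.minL := by
            rw [← CBT.minL_toForest r, heq, foldr_min_of_chain Cr]
          have h := H y₀ (by simp)
          rw [hy₀] at h
          rcases min_lt_iff.mp h with h2 | h2
          · rcases min_lt_iff.mp (hlt.trans h2) with h3 | h3
            · exact h3
            · exact absurd h3 (lt_irrefl _)
          · exact h2

def ofForest : List CPT → CBT
  | [] => .nil
  | (.node a c ch) :: rest => .node a c (ofForest ch) (ofForest rest)

lemma ofForest_toForest : ∀ B : CBT, ofForest B.toForest = B
  | .nil => by rw [show CBT.nil.toForest = [] from rfl, ofForest]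
  | .node a c l r => by
      rw [CBT.toForest, ofForest, ofForest_toForest l, ofForest_toForest r]

lemma toForest_ofForest : ∀ F : List CPT, (ofForest F).toForest = F
  | [] => by rw [ofForest]; rfl
  | (.node a c ch) :: rest => by
      rw [ofForest, CBT.toForest, toForest_ofForest ch, toForest_ofForest rest]

lemma Icc_succ_val (n : ℕ) :
    (Finset.Icc 1 (n + 1)).val = (n + 1) ::ₘ (Finset.Icc 1 n).val := by
  have h : Finset.Icc 1 (n + 1) = insert (n + 1) (Finset.Icc 1 n) := by
    ext x; simp [Finset.mem_Icc]; omega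
  rw [h, Finset.insert_val_of_notMem (by simp)]

/-- The restriction `φ` of `Φ` to `ℰ_n` is a bijection from `ℰ_n` onto `𝒢_n`. -/
theorem phi_bijOn (n : ℕ) (hn : 0 < n) :
    Set.BijOn (Phi n) (Eset n) (Gset n) := by
  constructor
  · -- MapsTo
    rintro B ⟨hlab, hli⟩
    have hnd : B.labels.Nodup := hlab ▸ (Finset.Icc 1 n).nodup
    refine ⟨?_, rfl, rfl, ?_⟩
    · rw [Phi, CPT.labels_node, CBT.labels_toForest, hlab, Icc_succ_val]
    · rw [Phi, CPT.ordered_node]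
      exact (CBT.leftImp_iff_forest B hnd).mp hli
  constructor
  · -- InjOn
    intro B _ B' _ h
    have : B.toForest = B'.toForest := by
      injection h
    rw [← ofForest_toForest B, ← ofForest_toForest B', this]
  · -- SurjOn
    rintro Q ⟨hlab, hroot, hblack, hord⟩
    obtain ⟨a, c, ch⟩ := Q
    simp only [CPT.rootLabel] at hroot
    simp only [CPT.rootBlack] at hblack
    subst hroot; subst hblack
    refine ⟨ofForest ch, ⟨?_, ?_⟩, ?_⟩
    · have : (n+1) ::ₘ (ch.map CPT.labels).sum = (n+1) ::ₘ (Finset.Icc 1 n).val := by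
        rw [← Icc_succ_val, ← hlab, CPT.labels_node]
      have hsum : (ch.map CPT.labels).sum = (Finset.Icc 1 n).val :=
        (Multiset.cons_inj_right _).mp this
      rw [← CBT.labels_toForest, toForest_ofForest, hsum]
    · have hnd : (ofForest ch).labels.Nodup := by
        rw [← CBT.labels_toForest, toForest_ofForest]
        have h2 : (CPT.node (n+1) true ch).labels.Nodup := by
          rw [hlab]; exact (Finset.Icc 1 (n+1)).nodup
        rw [CPT.labels_node, Multiset.nodup_cons] at h2
        exact h2.2
      apply (CBT.leftImp_iff_forest _ hnd).mpr
      rw [toForest_ofForest]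
      exact (CPT.ordered_node _ _ _).mp hord
    · rw [Phi, toForest_ofForest]
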